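/- arXiv:2509.03123 — 5 statements merged into one kernel-verified Lean document; each statement's English description precedes it below -/
import Mathlib

section
/- Let q be a positive even modulus and ζ = 2^{(log₂ q)/2 − 1} (so ζ² < q/4). Let x, y ∈ [0, ζ] be integers, a, b integers with ζ > a > b > 0, and r ∈ {−1, 1}. Then v = a·r·(x − y) + b·r satisfies |v| < q/2 and v ≠ 0; moreover v > 0 if and only if (x ≥ y and r = 1) or (x < y and r = −1). -/
/-- Core correctness of PackObliviousCom: with q even and positive,
ζ = 2^{(log₂ q)/2 − 1} (so ζ² < q/4), 0 ≤ x, y ≤ ζ, ζ > a > b > 0 and r ∈ {−1,1},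
the blinded difference v = a·r·(x−y) + b·r satisfies |v| < q/2, v ≠ 0, and
v > 0 iff (x ≥ y ∧ r = 1) ∨ (x < y ∧ r = −1). -/
theorem stmt4 (q ζ x y a b r v : ℤ)
    (hq : 0 < q) (hqe : Even q)
    (hζ : ζ = 2 ^ (Nat.log 2 q.toNat / 2 - 1))
    (hsq : ζ ^ 2 < q / 4)
    (hx0 : 0 ≤ x) (hxζ : x ≤ ζ) (hy0 : 0 ≤ y) (hyζ : y ≤ ζ)
    (haζ : a < ζ) (hba : b < a) (hb0 : 0 < b)
    (hr : r = -1 ∨ r = 1)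
    (hv : v = a * r * (x - y) + b * r) :
    |v| < q / 2 ∧ v ≠ 0 ∧ (0 < v ↔ ((y ≤ x ∧ r = 1) ∨ (x < y ∧ r = -1))) := by
  have hq42 : q / 4 ≤ q / 2 := by omega
  have hζ2 : ζ ^ 2 < q / 2 := lt_of_lt_of_le hsq hq42
  have ha0 : 0 < a := lt_trans hb0 hba
  -- sign of w = a*(x-y)+b
  have hpos : y ≤ x → 0 < a * (x - y) + b := by
    intro h
    nlinarith [mul_nonneg ha0.le (sub_nonneg.mpr h)]
  have hneg : x < y → a * (x - y) + b < 0 := by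
    intro h
    nlinarith [mul_le_mul_of_nonneg_left (by omega : x - y ≤ -1) ha0.le]
  have habs : |a * (x - y) + b| < q / 2 := by
    rw [abs_lt]
    constructor
    · nlinarith [mul_le_mul_of_nonneg_left (by omega : -ζ ≤ x - y) ha0.le]
    · nlinarith [mul_le_mul_of_nonneg_left (by omega : x - y ≤ ζ) ha0.le]
  rcases hr with hr | hr <;> subst hr <;> subst hv
  · have hv' : a * (-1) * (x - y) + b * (-1) = -(a * (x - y) + b) := by ring
    rw [hv', abs_neg]
    refine ⟨habs, ?_, ?_⟩
    · rcases le_or_gt y x with h | h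
      · have := hpos h; intro h'; omega
      · have := hneg h; intro h'; omega
    · constructor
      · intro h
        rcases le_or_gt y x with h2 | h2
        · have := hpos h2; omega
        · exact Or.inr ⟨h2, rfl⟩
      · rintro (⟨_, h⟩ | ⟨h2, _⟩)
        · exact absurd h (by norm_num)
        · have := hneg h2; omega
  · have hv' : a * 1 * (x - y) + b * 1 = a * (x - y) + b := by ring
    rw [hv']
    refine ⟨habs, ?_, ?_⟩
    · rcases le_or_gt y x with h | h
      · have := hpos h; omega
      · have := hneg h; omega
    · constructor
      · intro h
        rcases le_or_gt y x with h2 | h2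
        · exact Or.inl ⟨h2, rfl⟩
        · have := hneg h2; omega
      · rintro (⟨h2, _⟩ | ⟨_, h⟩)
        · exact hpos h2
        · exact absurd h (by norm_num)
end

section
/- With notation as in PackObliviousCom, let x, y ∈ [0, ζ], ζ > a > b > 0, r ∈ {−1,1}, v = a·r·(x−y) + b·r, v' = (if v < 0 then 0 else 1), and c' = (if r = −1 then 1 else 0). Then c = c' + r·v' satisfies: c = 0 if x < y and c = 1 if x ≥ y. -/
/-- Truth-table correctness of PackObliviousCom unblinding: with
v = a·r·(x−y) + b·r, v' the sign bit of v, and c' = [r = −1],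
the unblinded bit c = c' + r·v' equals 0 iff x < y and 1 iff x ≥ y. -/
theorem stmt5 (ζ x y a b r v v' c' c : ℤ)
    (hx0 : 0 ≤ x) (hxζ : x ≤ ζ) (hy0 : 0 ≤ y) (hyζ : y ≤ ζ)
    (haζ : a < ζ) (hba : b < a) (hb0 : 0 < b)
    (hr : r = -1 ∨ r = 1)
    (hv : v = a * r * (x - y) + b * r)
    (hv' : v' = if v < 0 then 0 else 1)
    (hc' : c' = if r = -1 then 1 else 0)
    (hc : c = c' + r * v') :
    (x < y → c = 0) ∧ (y ≤ x → c = 1) := by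
  have hab : 0 < a := hb0.trans hba
  constructor <;> intro h
  · -- x < y : show c = 0
    have hxy1 : x - y ≤ -1 := by omega
    have key : a * (x - y) ≤ -a := by nlinarith
    rcases hr with rfl | rfl
    · -- r = -1 : v = -a(x-y) - b ≥ a - b > 0
      have hvpos : ¬ v < 0 := by rw [hv]; push_neg; nlinarith
      rw [hc, hc', hv', if_pos rfl, if_neg hvpos]; ring
    · -- r = 1 : v = a(x-y) + b ≤ -a + b < 0
      have hvneg : v < 0 := by rw [hv]; nlinarith
      rw [hc, hc', hv', if_pos hvneg, if_neg (by norm_num)]; ring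
  · -- y ≤ x : show c = 1
    have key : 0 ≤ a * (x - y) := by nlinarith
    rcases hr with rfl | rfl
    · -- r = -1 : v = -a(x-y) - b < 0
      have hvneg : v < 0 := by rw [hv]; nlinarith
      rw [hc, hc', hv', if_pos rfl, if_pos hvneg]; ring
    · -- r = 1 : v = a(x-y) + b ≥ b > 0
      have hvpos : ¬ v < 0 := by rw [hv]; push_neg; nlinarith
      rw [hc, hc', hv', if_neg hvpos, if_neg (by norm_num)]; ring
end

section
/- Let x', y' be integers with 2x' and 2y'−1 in [0, ζ], a, b integers with ζ > a > b > 0, and r, r' ∈ {−1,1}. Then v = a·r·r'·(2(x'−y') + 1) + r·b is nonzero, satisfies |v| ≤ ζ² + ζ, and the support of |v| is identical regardless of the value of r; moreover sign(v) = r·r'·sign(2(x'−y')+1) when b < a (since |a(2(x'−y')+1)| ≥ a > b). -/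
lemma sign_of_key (a b d : ℤ) (r' : ℤ) (hd : d ≥ 1 ∨ d ≤ -1)
    (hba : b < a) (hb0 : 0 < b) (hr' : r' = -1 ∨ r' = 1) :
    (a * r' * d + b) ≠ 0 ∧
    Int.sign (a * r' * d + b) = r' * Int.sign d := by
  have ha : 0 < a := lt_trans hb0 hba
  rcases hr' with rfl | rfl <;> rcases hd with hd | hd
  · -- r' = -1, d ≥ 1 : w = -a*d + b < 0
    have had : a ≤ a * d := le_mul_of_one_le_right ha.le hd
    have hw : a * (-1) * d + b < 0 := by nlinarith
    refine ⟨by omega, ?_⟩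
    rw [Int.sign_eq_neg_one_of_neg hw, Int.sign_eq_one_of_pos (by omega : 0 < d)]
    ring
  · have had : a * d ≤ -a := by nlinarith
    have hw : 0 < a * (-1) * d + b := by nlinarith
    refine ⟨by omega, ?_⟩
    rw [Int.sign_eq_one_of_pos hw, Int.sign_eq_neg_one_of_neg (by omega : d < 0)]
    ring
  · have had : a ≤ a * d := le_mul_of_one_le_right ha.le hd
    have hw : 0 < a * 1 * d + b := by nlinarith
    refine ⟨by omega, ?_⟩
    rw [Int.sign_eq_one_of_pos hw, Int.sign_eq_one_of_pos (by omega : 0 < d)]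
    ring
  · have had : a * d ≤ -a := by nlinarith
    have hw : a * 1 * d + b < 0 := by nlinarith
    refine ⟨by omega, ?_⟩
    rw [Int.sign_eq_neg_one_of_neg hw, Int.sign_eq_neg_one_of_neg (by omega : d < 0)]
    ring

/-- Correctness and sign-hiding of the enhanced protocol PackObliviousCom⁺:
v = a·r·r'·(2(x'−y')+1) + r·b is nonzero, |v| ≤ ζ² + ζ, |v| is independent of the
value of r (it equals |a·r'·(2(x'−y')+1) + b|), and the sign of v equals
r·r'·sign(2(x'−y')+1). -/
theorem stmt7 (ζ x' y' a b r r' v : ℤ)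
    (hx0 : 0 ≤ 2 * x') (hxζ : 2 * x' ≤ ζ)
    (hy0 : 0 ≤ 2 * y' - 1) (hyζ : 2 * y' - 1 ≤ ζ)
    (haζ : a < ζ) (hba : b < a) (hb0 : 0 < b)
    (hr : r = -1 ∨ r = 1) (hr' : r' = -1 ∨ r' = 1)
    (hv : v = a * r * r' * (2 * (x' - y') + 1) + r * b) :
    v ≠ 0 ∧ |v| ≤ ζ ^ 2 + ζ ∧
    |v| = |a * r' * (2 * (x' - y') + 1) + b| ∧
    Int.sign v = r * r' * Int.sign (2 * (x' - y') + 1) := by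
  set d := 2 * (x' - y') + 1 with hdd
  have hd : d ≥ 1 ∨ d ≤ -1 := by omega
  have ha : 0 < a := lt_trans hb0 hba
  have hdb : -ζ ≤ d ∧ d ≤ ζ := by omega
  obtain ⟨hw0, hws⟩ := sign_of_key a b d r' hd hba hb0 hr'
  have hvw : v = r * (a * r' * d + b) := by rw [hv]; ring
  have hr1 : |r| = 1 := by rcases hr with rfl | rfl <;> norm_num
  have habs : |v| = |a * r' * d + b| := by
    rw [hvw, abs_mul, hr1, one_mul]
  refine ⟨?_, ?_, habs, ?_⟩
  · intro h
    apply hw0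
    rw [h] at habs
    exact abs_eq_zero.mp habs.symm
  · rw [habs]
    have hr'1 : |r'| = 1 := by rcases hr' with rfl | rfl <;> norm_num
    have hbd : |a * r' * d| ≤ (ζ - 1) * ζ := by
      rw [abs_mul, abs_mul, hr'1, mul_one, abs_of_pos ha]
      have : |d| ≤ ζ := abs_le.2 ⟨hdb.1, hdb.2⟩
      have := abs_nonneg d
      nlinarith
    calc |a * r' * d + b| ≤ |a * r' * d| + |b| := abs_add_le _ _
      _ ≤ (ζ - 1) * ζ + ζ := by rw [abs_of_pos hb0]; omega
      _ ≤ ζ ^ 2 + ζ := by nlinarith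
  · rw [hvw, Int.sign_mul, hws]
    rcases hr with rfl | rfl <;> simp
end

section
/- Additive blinding of path costs is correct: let the client assign to node n a left cost c_n + r'_n and right cost 1 − c_n − r'_n, and the server assign left cost −r'_n and right cost r'_n, where r'_n are arbitrary integers. Then for every leaf, the sum of the client's path sum and the server's path sum equals the unblinded path cost (sum of c_n over left edges plus (1 − c_n) over right edges along the path). In particular, exactly one leaf has combined sum 0 and all other leaves have combined sum ≥ 1. -/
/-- A binary decision tree whose nodes carry a comparison bit c and a blinding
offset ρ (an arbitrary integer). -/
inductive BDTree where
  | leaf : BDTree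
  | node : Bool → ℤ → BDTree → BDTree → BDTree

/-- Client's blinded path sums: left cost c + ρ, right cost 1 − c − ρ. -/
def BDTree.clientCosts : BDTree → List ℤ
  | .leaf => [0]
  | .node c ρ l r =>
      (l.clientCosts.map (· + ((if c then 1 else 0) + ρ))) ++
        (r.clientCosts.map (· + (1 - (if c then 1 else 0) - ρ)))

/-- Server's perturbation path sums: left cost −ρ, right cost ρ. -/
def BDTree.serverCosts : BDTree → List ℤ
  | .leaf => [0]
  | .node _ ρ l r =>
      (l.serverCosts.map (· + (-ρ))) ++ (r.serverCosts.map (· + ρ))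

/-- Unblinded path costs: left cost c, right cost 1 − c. -/
def BDTree.trueCosts : BDTree → List ℤ
  | .leaf => [0]
  | .node c _ l r =>
      (l.trueCosts.map (· + (if c then 1 else 0))) ++
        (r.trueCosts.map (· + (if c then 0 else 1)))

namespace BDTree

lemma getD_map_add (l : List ℤ) (a : ℤ) (j : ℕ) (h : j < l.length) :
    (l.map (· + a)).getD j 0 = l.getD j 0 + a := by
  simp [List.getD_eq_getElem?_getD, List.getElem?_eq_getElem, h]

lemma len_client (t : BDTree) : t.clientCosts.length = t.trueCosts.length := by
  induction t with
  | leaf => rfl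
  | node c ρ l r ihl ihr => simp [clientCosts, trueCosts, ihl, ihr]

lemma len_server (t : BDTree) : t.serverCosts.length = t.trueCosts.length := by
  induction t with
  | leaf => rfl
  | node c ρ l r ihl ihr => simp [serverCosts, trueCosts, ihl, ihr]

lemma pointwise (t : BDTree) : ∀ j < t.trueCosts.length,
    t.clientCosts.getD j 0 + t.serverCosts.getD j 0 = t.trueCosts.getD j 0 := by
  induction t with
  | leaf =>
    intro j hj
    simp only [trueCosts, List.length_singleton] at hj
    interval_cases j; rfl
  | node c ρ l r ihl ihr =>
    intro j hj
    simp only [clientCosts, serverCosts, trueCosts, List.length_append,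
      List.length_map] at *
    by_cases h : j < l.trueCosts.length
    · rw [List.getD_append _ _ 0 j (by rw [List.length_map, len_client]; exact h),
        List.getD_append _ _ 0 j (by rw [List.length_map, len_server]; exact h),
        List.getD_append _ _ 0 j (by rw [List.length_map]; exact h),
        getD_map_add _ _ _ (by rw [len_client]; exact h),
        getD_map_add _ _ _ (by rw [len_server]; exact h),
        getD_map_add _ _ _ h]
      have := ihl j h
      linarith
    · push_neg at h
      have hk : j - l.trueCosts.length < r.trueCosts.length := by omega
      rw [List.getD_append_right _ _ 0 j (by rw [List.length_map, len_client]; exact h),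
        List.getD_append_right _ _ 0 j (by rw [List.length_map, len_server]; exact h),
        List.getD_append_right _ _ 0 j (by rw [List.length_map]; exact h),
        List.length_map, List.length_map, List.length_map, len_client, len_server,
        getD_map_add _ _ _ (by rw [len_client]; exact hk),
        getD_map_add _ _ _ (by rw [len_server]; exact hk),
        getD_map_add _ _ _ hk]
      have := ihr _ hk
      cases c <;> simp at this ⊢ <;> linarith

lemma true_getD_nonneg (t : BDTree) : ∀ j < t.trueCosts.length,
    0 ≤ t.trueCosts.getD j 0 := by
  induction t with
  | leaf =>
    intro j hj
    simp only [trueCosts, List.length_singleton] at hj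
    interval_cases j; simp [trueCosts]
  | node c ρ l r ihl ihr =>
    intro j hj
    simp only [trueCosts, List.length_append, List.length_map] at *
    by_cases h : j < l.trueCosts.length
    · rw [List.getD_append _ _ 0 j (by rw [List.length_map]; exact h),
        getD_map_add _ _ _ h]
      have := ihl j h
      cases c <;> simp at this ⊢ <;> linarith
    · push_neg at h
      have hk : j - l.trueCosts.length < r.trueCosts.length := by omega
      rw [List.getD_append_right _ _ 0 j (by rw [List.length_map]; exact h),
        List.length_map, getD_map_add _ _ _ hk]
      have := ihr _ hk
      cases c <;> simp at this ⊢ <;> linarith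

lemma true_unique_zero (t : BDTree) :
    ∃! j, j < t.trueCosts.length ∧ t.trueCosts.getD j 0 = 0 := by
  induction t with
  | leaf =>
    refine ⟨0, ⟨by simp [trueCosts], rfl⟩, ?_⟩
    rintro y ⟨hy, -⟩
    simpa [trueCosts] using hy
  | node c ρ l r ihl ihr =>
    cases c
    · -- c = false : zero in left subtree
      obtain ⟨j0, ⟨hj0, hz⟩, huniq⟩ := ihl
      refine ⟨j0, ⟨?_, ?_⟩, ?_⟩
      · simp only [trueCosts, List.length_append, List.length_map]; omega
      · simp only [trueCosts]
        rw [List.getD_append _ _ 0 j0 (by rw [List.length_map]; exact hj0),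
          getD_map_add _ _ _ hj0]
        simpa using hz
      · rintro y ⟨hy, hyz⟩
        simp only [trueCosts, List.length_append, List.length_map] at hy hyz
        by_cases h : y < l.trueCosts.length
        · rw [List.getD_append _ _ 0 y (by rw [List.length_map]; exact h),
            getD_map_add _ _ _ h] at hyz
          exact huniq y ⟨h, by simpa using hyz⟩
        · exfalso
          push_neg at h
          have hk : y - l.trueCosts.length < r.trueCosts.length := by omega
          rw [List.getD_append_right _ _ 0 y (by rw [List.length_map]; exact h),
            List.length_map, getD_map_add _ _ _ hk] at hyz
          have := true_getD_nonneg r _ hk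
          simp at hyz this
          omega
    · -- c = true : zero in right subtree
      obtain ⟨j0, ⟨hj0, hz⟩, huniq⟩ := ihr
      refine ⟨l.trueCosts.length + j0, ⟨?_, ?_⟩, ?_⟩
      · simp only [trueCosts, List.length_append, List.length_map]; omega
      · simp only [trueCosts]
        rw [List.getD_append_right _ _ 0 _ (by rw [List.length_map]; omega),
          List.length_map]
        have : l.trueCosts.length + j0 - l.trueCosts.length = j0 := by omega
        rw [this, getD_map_add _ _ _ hj0]
        simpa using hz
      · rintro y ⟨hy, hyz⟩
        simp only [trueCosts, List.length_append, List.length_map] at hy hyz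
        by_cases h : y < l.trueCosts.length
        · exfalso
          rw [List.getD_append _ _ 0 y (by rw [List.length_map]; exact h),
            getD_map_add _ _ _ h] at hyz
          have := true_getD_nonneg l _ h
          simp at hyz this
          omega
        · push_neg at h
          have hk : y - l.trueCosts.length < r.trueCosts.length := by omega
          rw [List.getD_append_right _ _ 0 y (by rw [List.length_map]; exact h),
            List.length_map, getD_map_add _ _ _ hk] at hyz
          have := huniq _ ⟨hk, by simpa using hyz⟩
          omega

end BDTree

/-- Additive blinding correctness. -/
theorem stmt11 (t : BDTree) :
    (∀ j, j < t.trueCosts.length →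
      t.clientCosts.getD j 0 + t.serverCosts.getD j 0 = t.trueCosts.getD j 0) ∧
    (∃! j, j < t.trueCosts.length ∧
      t.clientCosts.getD j 0 + t.serverCosts.getD j 0 = 0) ∧
    (∀ j, j < t.trueCosts.length →
      t.clientCosts.getD j 0 + t.serverCosts.getD j 0 ≠ 0 →
      1 ≤ t.clientCosts.getD j 0 + t.serverCosts.getD j 0) := by
  refine ⟨BDTree.pointwise t, ?_, ?_⟩
  · obtain ⟨j0, ⟨hj0, hz⟩, huniq⟩ := BDTree.true_unique_zero t
    refine ⟨j0, ⟨hj0, by rw [BDTree.pointwise t j0 hj0]; exact hz⟩, ?_⟩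
    rintro y ⟨hy, hyz⟩
    exact huniq y ⟨hy, by rw [← BDTree.pointwise t y hy]; exact hyz⟩
  · intro j hj hne
    rw [BDTree.pointwise t j hj] at *
    have := BDTree.true_getD_nonneg t j hj
    omega
end

section
/- Flip-correction for obfuscated trees is correct: let c ∈ {0,1} be the true comparison bit at a node and υ ∈ {−1, 1} indicate whether the node's children were swapped (υ = −1 means swapped). Define the published bit c̃ = c if υ = 1 and c̃ = 1 − c if υ = −1. Then evaluating the swapped tree with bits c̃ follows the same leaf (under the child-swap isomorphism) as evaluating the original tree with bits c. -/
/-- A decision tree whose nodes are labelled by an index n; the comparison bit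
at node n is given externally by a function c : ℕ → Bool. -/
inductive ITree where
  | leaf : ℤ → ITree
  | node : ℕ → ITree → ITree → ITree

/-- Evaluate with bits c: at node n go right if c n = true (bit 1), left if
c n = false (bit 0); return the weight of the reached leaf. -/
def ITree.eval (c : ℕ → Bool) : ITree → ℤ
  | .leaf w => w
  | .node n l r => if c n then (r.eval c) else (l.eval c)

/-- Obfuscate a tree: swap the two children of node n exactly when sw n = true
(υ = −1 means swapped). -/
def ITree.obf (sw : ℕ → Bool) : ITree → ITree
  | .leaf w => .leaf w
  | .node n l r =>
      if sw n then .node n (r.obf sw) (l.obf sw)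
      else .node n (l.obf sw) (r.obf sw)

/-- Flip-correction for obfuscated trees is correct: evaluating the swapped tree
with the flipped bits c̃ (c̃ n = ¬ c n at swapped nodes, c n otherwise) reaches
the same leaf (weight) as evaluating the original tree with bits c. -/
theorem stmt17 (t : ITree) (c : ℕ → Bool) (sw : ℕ → Bool) :
    (t.obf sw).eval (fun n => if sw n then !(c n) else c n) = t.eval c := by
  induction t with
  | leaf w => rfl
  | node n l r ihl ihr =>
    simp only [ITree.obf]
    by_cases h : sw n <;> simp [h, ITree.eval, ihl, ihr] <;> cases c n <;> simp
end
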